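/- Assume WRP(ω₂). Then WCC⁺_cof holds: for every function F : ω₂^{<ω} → ω₂ there exists a function G : ω₂^{<ω} → ω₂ such that for every countable X ⊆ ω₂ closed under G and every ordinal α < ω₂ there is a countable Y ⊆ ω₂ with X ⊊ Y, sup Y > α, X ∩ ω₁ = Y ∩ ω₁, and Y closed under F. -/

import Mathlib

noncomputable section

open Cardinal

/-- The first uncountable cardinal, as an ordinal. -/
def omega1 : Ordinal.{0} := (aleph 1).ord

/-- The second uncountable cardinal, as an ordinal. -/
def omega2 : Ordinal.{0} := (aleph 2).ord

/-- `X` is closed under `f : A^{<ω} → A` (modelled on all finite sequences of ordinals):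
`f s ∈ X` for every finite sequence `s` of elements of `X`. -/
def ClosedUnder (f : List Ordinal.{0} → Ordinal) (X : Set Ordinal.{0}) : Prop :=
  ∀ s : List Ordinal.{0}, (∀ x ∈ s, x ∈ X) → f s ∈ X

/-- `f` maps finite sequences of ordinals below `A` to ordinals below `A`,
i.e. `f` codes a function `A^{<ω} → A`. -/
def IntoBelow (A : Ordinal.{0}) (f : List Ordinal.{0} → Ordinal) : Prop :=
  ∀ s : List Ordinal.{0}, (∀ x ∈ s, x < A) → f s < A

/-- `S` is stationary in `[A]^ω`: for every `f : A^{<ω} → A` there is a countable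
`X ⊆ A` closed under `f` with `X ∈ S`. -/
def StationaryIn (A : Ordinal.{0}) (S : Set (Set Ordinal.{0})) : Prop :=
  ∀ f : List Ordinal.{0} → Ordinal, IntoBelow A f →
    ∃ X : Set Ordinal.{0}, X.Countable ∧ (∀ x ∈ X, x < A) ∧ ClosedUnder f X ∧ X ∈ S

/-- The weak reflection principle `WRP(ω₂)`: every stationary `S ⊆ [ω₂]^ω` reflects
to `[λ]^ω` for some `ω₁ ≤ λ < ω₂`. -/
def WRP2 : Prop :=
  ∀ S : Set (Set Ordinal.{0}),
    (∀ X ∈ S, X.Countable ∧ ∀ x ∈ X, x < omega2) →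
    StationaryIn omega2 S →
    ∃ lam : Ordinal.{0}, omega1 ≤ lam ∧ lam < omega2 ∧
      StationaryIn lam {X | X ∈ S ∧ ∀ x ∈ X, x < lam}

/-- `C` is a club subset of `ω₁`: a set of ordinals below `ω₁`, unbounded in `ω₁`,
and closed under suprema of its nonempty subsets that are bounded below `ω₁`. -/
def ClubInOmega1 (C : Set Ordinal.{0}) : Prop :=
  (∀ o ∈ C, o < omega1) ∧
  (∀ a < omega1, ∃ b ∈ C, a < b) ∧
  (∀ D : Set Ordinal.{0}, D ⊆ C → D.Nonempty → (∃ b < omega1, ∀ x ∈ D, x ≤ b) → sSup D ∈ C)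

/-- `T` is stationary in `ω₁`: `T ⊆ ω₁` meets every club subset of `ω₁`. -/
def StationaryInOmega1 (T : Set Ordinal.{0}) : Prop :=
  (∀ o ∈ T, o < omega1) ∧ ∀ C : Set Ordinal.{0}, ClubInOmega1 C → (T ∩ C).Nonempty

/-- `clf f Z`: the smallest set of ordinals containing `Z` and closed under `f`. -/
def clf (f : List Ordinal.{0} → Ordinal) (Z : Set Ordinal.{0}) : Set Ordinal.{0} :=
  ⋂₀ {W : Set Ordinal.{0} | Z ⊆ W ∧ ClosedUnder f W}

end

/-! ### Auxiliary material for the proof -/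

noncomputable section
namespace WCCAux

open Cardinal Set
open scoped Classical

/-- Iterative closure stages. -/
def iterCl (f : List Ordinal.{0} → Ordinal) (Z : Set Ordinal.{0}) : ℕ → Set Ordinal.{0}
  | 0 => Z
  | n + 1 => iterCl f Z n ∪ f '' {s : List Ordinal.{0} | ∀ x ∈ s, x ∈ iterCl f Z n}

/-- The closure of `Z` under `f`, as a countable union of stages. -/
def cl (f : List Ordinal.{0} → Ordinal) (Z : Set Ordinal.{0}) : Set Ordinal.{0} :=
  ⋃ n, iterCl f Z n

lemma iterCl_mono (f : List Ordinal.{0} → Ordinal) (Z : Set Ordinal.{0}) :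
    Monotone (iterCl f Z) :=
  monotone_nat_of_le_succ fun _ => Set.subset_union_left

lemma subset_cl (f : List Ordinal.{0} → Ordinal) (Z : Set Ordinal.{0}) : Z ⊆ cl f Z :=
  Set.subset_iUnion (iterCl f Z) 0

lemma exists_stage_nat (M : ℕ → Set Ordinal.{0}) (hM : Monotone M) (s : List Ordinal.{0})
    (hs : ∀ x ∈ s, x ∈ ⋃ n, M n) : ∃ N, ∀ x ∈ s, x ∈ M N := by
  induction s with
  | nil => exact ⟨0, by simp⟩
  | cons a t ih =>
    obtain ⟨Nt, hNt⟩ := ih fun x hx => hs x (List.mem_cons_of_mem a hx)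
    obtain ⟨Na, hNa⟩ := Set.mem_iUnion.1 (hs a List.mem_cons_self)
    refine ⟨max Na Nt, fun x hx => ?_⟩
    rcases List.mem_cons.1 hx with rfl | hx
    · exact hM (le_max_left _ _) hNa
    · exact hM (le_max_right _ _) (hNt x hx)

lemma cl_closedUnder (f : List Ordinal.{0} → Ordinal) (Z : Set Ordinal.{0}) :
    ClosedUnder f (cl f Z) := by
  intro s hs
  obtain ⟨N, hN⟩ := exists_stage_nat _ (iterCl_mono f Z) s hs
  exact Set.mem_iUnion.2 ⟨N + 1, Or.inr ⟨s, hN, rfl⟩⟩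

lemma cl_subset (f : List Ordinal.{0} → Ordinal) {Z W : Set Ordinal.{0}}
    (hZW : Z ⊆ W) (hW : ClosedUnder f W) : cl f Z ⊆ W := by
  have key : ∀ n, iterCl f Z n ⊆ W := by
    intro n
    induction n with
    | zero => exact hZW
    | succ n ih =>
      intro x hx
      rcases hx with hx | ⟨s, hsmem, rfl⟩
      · exact ih hx
      · exact hW s fun y hy => ih (hsmem y hy)
  exact Set.iUnion_subset key

lemma cl_mono (f : List Ordinal.{0} → Ordinal) {Z Z' : Set Ordinal.{0}} (h : Z ⊆ Z') :
    cl f Z ⊆ cl f Z' :=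
  cl_subset f (h.trans (subset_cl f Z')) (cl_closedUnder f Z')

lemma countable_lists {S : Set Ordinal.{0}} (hS : S.Countable) :
    {s : List Ordinal.{0} | ∀ x ∈ s, x ∈ S}.Countable := by
  haveI := hS.to_subtype
  apply Set.Countable.mono ?_ (Set.countable_range fun l : List S => l.map Subtype.val)
  intro s hs
  refine ⟨s.pmap (fun x hx => (⟨x, hx⟩ : S)) hs, ?_⟩
  show List.map Subtype.val (s.pmap (fun x hx => (⟨x, hx⟩ : S)) hs) = s
  rw [List.map_pmap]
  simp

lemma cl_countable (f : List Ordinal.{0} → Ordinal) {Z : Set Ordinal.{0}} (hZ : Z.Countable) :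
    (cl f Z).Countable := by
  have key : ∀ n, (iterCl f Z n).Countable := by
    intro n
    induction n with
    | zero => exact hZ
    | succ n ih => exact ih.union ((countable_lists ih).image f)
  exact Set.countable_iUnion key

lemma exists_stage_ord {δ : Ordinal.{0}} (hδ : 0 < δ) (M : Ordinal.{0} → Set Ordinal.{0})
    (hM : ∀ i i', i ≤ i' → M i ⊆ M i') (s : List Ordinal.{0})
    (hs : ∀ x ∈ s, x ∈ ⋃ i ∈ Set.Iio δ, M i) : ∃ i < δ, ∀ x ∈ s, x ∈ M i := by
  induction s with
  | nil => exact ⟨0, hδ, by simp⟩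
  | cons a t ih =>
    obtain ⟨i, hi, hit⟩ := ih fun x hx => hs x (List.mem_cons_of_mem a hx)
    obtain ⟨i', hi', ha⟩ := Set.mem_iUnion₂.1 (hs a List.mem_cons_self)
    refine ⟨max i i', max_lt hi hi', fun x hx => ?_⟩
    rcases List.mem_cons.1 hx with rfl | hx
    · exact hM _ _ (le_max_right _ _) ha
    · exact hM _ _ (le_max_left _ _) (hit x hx)

lemma cl_biUnion (f : List Ordinal.{0} → Ordinal) {δ : Ordinal.{0}} (hδ : 0 < δ)
    (A : Ordinal.{0} → Set Ordinal.{0}) (hA : ∀ i i', i ≤ i' → A i ⊆ A i') :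
    cl f (⋃ i ∈ Set.Iio δ, A i) = ⋃ i ∈ Set.Iio δ, cl f (A i) := by
  apply Set.Subset.antisymm
  · refine cl_subset f ?_ ?_
    · exact Set.iUnion₂_mono fun i _ => subset_cl f (A i)
    · intro s hs
      obtain ⟨i, hi, h⟩ := exists_stage_ord hδ (fun i => cl f (A i))
        (fun i i' hii => cl_mono f (hA i i' hii)) s hs
      exact Set.mem_iUnion₂.2 ⟨i, hi, cl_closedUnder f (A i) s h⟩
  · intro x hx
    obtain ⟨i, hi, hxi⟩ := Set.mem_iUnion₂.1 hx
    exact cl_mono f (Set.subset_iUnion₂ (s := fun i' (_ : i' ∈ Set.Iio δ) => A i') i hi) hxi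

lemma isRegular_aleph_two : Cardinal.IsRegular (aleph 2) := by
  have h := isRegular_aleph_succ 1
  rwa [show Order.succ (1 : Ordinal) = 2 by rw [← Ordinal.add_one_eq_succ, one_add_one_eq_two]] at h

lemma sSup_lt_ord_of_countable {c : Cardinal.{0}} (hreg : Cardinal.IsRegular c) (hc : ℵ₀ < c)
    {S : Set Ordinal.{0}} (hS : S.Countable) (hb : ∀ o ∈ S, o < c.ord) : sSup S < c.ord := by
  have h0 : (0 : Ordinal) < c.ord :=
    Cardinal.lt_ord.2 (by rw [Ordinal.card_zero]; exact aleph0_pos.trans hc)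
  rcases S.eq_empty_or_nonempty with rfl | hne
  · rw [csSup_empty]; exact h0
  · obtain ⟨g, hg⟩ := hS.exists_eq_range hne
    have h2 : sSup S = ⨆ n, g n := by rw [hg]; rfl
    rw [h2]
    exact Cardinal.iSup_lt_ord_of_isRegular hreg (by rwa [mk_nat])
      fun n => hb _ (by rw [hg]; exact Set.mem_range_self n)

lemma omega1_pos : (0 : Ordinal) < omega1 :=
  Cardinal.lt_ord.2 (by rw [Ordinal.card_zero]; exact aleph_pos 1)

lemma omega2_pos : (0 : Ordinal) < omega2 :=
  Cardinal.lt_ord.2 (by rw [Ordinal.card_zero]; exact aleph_pos 2)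

lemma omega0_lt_omega1 : Ordinal.omega0 < omega1 := by
  rw [show omega1 = (aleph 1).ord from rfl, ← Cardinal.ord_aleph0]
  exact Cardinal.ord_lt_ord.2 aleph0_lt_aleph_one

lemma isLimit_omega1 : Order.IsSuccLimit omega1 := Cardinal.isSuccLimit_ord (aleph0_le_aleph 1)

lemma isLimit_omega2 : Order.IsSuccLimit omega2 := Cardinal.isSuccLimit_ord (aleph0_le_aleph 2)

lemma ord_lt_add_one (o : Ordinal.{0}) : o < o + 1 := by
  rw [Ordinal.add_one_eq_succ]; exact Order.lt_succ o

lemma add_one_le_of_lt {a b : Ordinal.{0}} (h : a < b) : a + 1 ≤ b := by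
  rw [Ordinal.add_one_eq_succ]; exact Order.succ_le_of_lt h

lemma add_one_lt_of_limit {a b : Ordinal.{0}} (hb : Order.IsSuccLimit b) (h : a < b) : a + 1 < b := by
  rw [Ordinal.add_one_eq_succ]; exact hb.succ_lt h

lemma countable_sSup_lt_omega1 {S : Set Ordinal.{0}} (hS : S.Countable)
    (hb : ∀ o ∈ S, o < omega1) : sSup S < omega1 :=
  sSup_lt_ord_of_countable isRegular_aleph_one aleph0_lt_aleph_one hS hb

lemma countable_sSup_lt_omega2 {S : Set Ordinal.{0}} (hS : S.Countable)
    (hb : ∀ o ∈ S, o < omega2) : sSup S < omega2 :=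
  sSup_lt_ord_of_countable isRegular_aleph_two
    (aleph0_lt_aleph_one.trans (aleph_lt_aleph.2 one_lt_two)) hS hb

lemma countable_Iio {i : Ordinal.{0}} (hi : i < omega1) : (Set.Iio i).Countable := by
  have h1 : #(↥(Set.Iio i)) ≤ ℵ₀ := by
    rw [Ordinal.mk_Iio_ordinal]
    have h2 : i.card < aleph 1 := Cardinal.lt_ord.1 hi
    have h3 : i.card ≤ ℵ₀ := by
      rw [show (1 : Ordinal) = Order.succ 0 from (Ordinal.succ_zero).symm, aleph_succ,
        aleph_zero] at h2
      exact Order.lt_succ_iff.1 h2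
    rw [← Cardinal.lift_aleph0.{1, 0}]
    exact Cardinal.lift_le.2 h3
  exact Set.countable_coe_iff.1 (Cardinal.mk_le_aleph0_iff.1 h1)

/-- The set of "bad" countable subsets of `ω₂` for `F`. -/
def BadSet (F : List Ordinal.{0} → Ordinal) : Set (Set Ordinal.{0}) :=
  {X | X.Countable ∧ (∀ x ∈ X, x < omega2) ∧
    ∃ a, a < omega2 ∧ ∀ ξ, a < ξ → ξ < omega2 → ¬(cl F (X ∪ {ξ}) ∩ Set.Iio omega1 ⊆ X)}

lemma good_of_not_bad {F : List Ordinal.{0} → Ordinal} (hF : IntoBelow omega2 F)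
    {X : Set Ordinal.{0}} (hXc : X.Countable) (hXb : ∀ x ∈ X, x < omega2)
    (hXnB : X ∉ BadSet F) :
    ∀ α < omega2,
      ∃ Y : Set Ordinal.{0}, Y.Countable ∧ (∀ y ∈ Y, y < omega2) ∧
        X ⊂ Y ∧ α < sSup Y ∧ X ∩ {o | o < omega1} = Y ∩ {o | o < omega1} ∧
        ClosedUnder F Y := by
  intro α hα
  have hsupX : sSup X < omega2 := countable_sSup_lt_omega2 hXc hXb
  have hnoex : ¬ ∃ a, a < omega2 ∧ ∀ ξ, a < ξ → ξ < omega2 →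
      ¬(cl F (X ∪ {ξ}) ∩ Set.Iio omega1 ⊆ X) :=
    fun hex => hXnB ⟨hXc, hXb, hex⟩
  push_neg at hnoex
  obtain ⟨ξ, hξ1, hξ2, hξ3⟩ := hnoex (max α (sSup X)) (max_lt hα hsupX)
  have hXY : X ⊆ cl F (X ∪ {ξ}) := (Set.subset_union_left).trans (subset_cl _ _)
  have hξY : ξ ∈ cl F (X ∪ {ξ}) := subset_cl _ _ (Or.inr rfl)
  have hYb : ∀ y ∈ cl F (X ∪ {ξ}), y < omega2 := by
    intro y hy
    refine cl_subset F (W := Set.Iio omega2) ?_ ?_ hy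
    · rintro z (hz | rfl)
      · exact hXb z hz
      · exact hξ2
    · intro s hs
      exact hF s hs
  have hξX : ξ ∉ X := by
    intro hmem
    have h1 : ξ ≤ max α (sSup X) :=
      (le_csSup ⟨omega2, fun y hy => (hXb y hy).le⟩ hmem).trans (le_max_right α (sSup X))
    exact absurd hξ1 (not_lt.2 h1)
  refine ⟨cl F (X ∪ {ξ}), cl_countable F (hXc.union (Set.countable_singleton ξ)), hYb,
    (Set.ssubset_iff_of_subset hXY).2 ⟨ξ, hξY, hξX⟩, ?_, ?_, cl_closedUnder F _⟩
  · exact lt_of_lt_of_le (lt_of_le_of_lt (le_max_left α (sSup X)) hξ1)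
      (le_csSup ⟨omega2, fun y hy => (hYb y hy).le⟩ hξY)
  · apply Set.Subset.antisymm
    · exact fun x hx => ⟨hXY hx.1, hx.2⟩
    · exact fun y hy => ⟨hξ3 ⟨hy.1, hy.2⟩, hy.2⟩

lemma not_stationary_bad {F : List Ordinal.{0} → Ordinal}
    {lam : Ordinal.{0}} (h1 : omega1 ≤ lam) (h2 : lam < omega2)
    (hstat : StationaryIn lam {X | X ∈ BadSet F ∧ ∀ x ∈ X, x < lam}) : False := by
  classical
  have h0lam : (0 : Ordinal) < lam := lt_of_lt_of_le omega1_pos h1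
  -- a surjection `e` from the ordinals below `ω₁` onto the ordinals below `lam`
  have hcard : lam.card ≤ aleph 1 := by
    have hlt : lam.card < aleph 2 := Cardinal.lt_ord.1 h2
    rw [show (2 : Ordinal) = Order.succ 1 by rw [← Ordinal.add_one_eq_succ, one_add_one_eq_two],
      aleph_succ] at hlt
    exact Order.lt_succ_iff.1 hlt
  have hinj : Nonempty (↥(Set.Iio lam) ↪ ↥(Set.Iio omega1)) := by
    rw [← Cardinal.le_def, Ordinal.mk_Iio_ordinal, Ordinal.mk_Iio_ordinal]
    refine Cardinal.lift_le.2 ?_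
    have hco : omega1.card = aleph 1 := Cardinal.card_ord (aleph 1)
    rw [hco]
    exact hcard
  obtain ⟨emb⟩ := hinj
  haveI hne : Nonempty ↥(Set.Iio lam) := ⟨⟨0, h0lam⟩⟩
  have he0 : Function.Surjective (Function.invFun emb) :=
    Function.LeftInverse.surjective (Function.leftInverse_invFun emb.injective)
  obtain ⟨e, he1, he2⟩ : ∃ e : Ordinal.{0} → Ordinal.{0},
      (∀ k, e k < lam) ∧ (∀ y, y < lam → ∃ k, k < omega1 ∧ e k = y) := by
    refine ⟨fun k => if hk : k < omega1 then (Function.invFun emb ⟨k, hk⟩ : ↥(Set.Iio lam)).1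
      else 0, fun k => ?_, fun y hy => ?_⟩
    · dsimp only
      split_ifs with hk
      · exact (Function.invFun emb ⟨k, hk⟩).2
      · exact h0lam
    · obtain ⟨p, hp⟩ := he0 ⟨y, hy⟩
      refine ⟨p.1, p.2, ?_⟩
      dsimp only
      rw [dif_pos (show (p : Ordinal) < omega1 from p.2),
        show (⟨p.1, p.2⟩ : ↥(Set.Iio omega1)) = p from rfl, hp]
  -- `h y` : an index enumerating `y`
  obtain ⟨h, hh1, hh2⟩ : ∃ h : Ordinal.{0} → Ordinal.{0},
      (∀ y, h y < omega1) ∧ (∀ y, y < lam → e (h y) = y) := by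
    refine ⟨fun y => sInf {k | k < omega1 ∧ e k = y}, fun y => ?_, fun y hy => ?_⟩
    · show sInf {k | k < omega1 ∧ e k = y} < omega1
      by_cases hne' : {k | k < omega1 ∧ e k = y}.Nonempty
      · exact (csInf_mem hne').1
      · rw [Set.not_nonempty_iff_eq_empty.1 hne', Ordinal.sInf_empty]
        exact omega1_pos
    · have hne' : {k | k < omega1 ∧ e k = y}.Nonempty := by
        obtain ⟨k, hk, hek⟩ := he2 y hy
        exact ⟨k, hk, hek⟩
      show e (sInf {k | k < omega1 ∧ e k = y}) = y
      exact (csInf_mem hne').2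
  -- the filtration `Z i`
  obtain ⟨Z, hZdef⟩ : ∃ Z : Ordinal.{0} → Set Ordinal.{0}, Z = fun i => e '' Set.Iio i := ⟨_, rfl⟩
  have hZmono : ∀ {i i' : Ordinal}, i ≤ i' → Z i ⊆ Z i' := by
    intro i i' hii
    rw [hZdef]
    exact Set.image_mono (Set.Iio_subset_Iio hii)
  have hZlam : ∀ i, ∀ x ∈ Z i, x < lam := by
    intro i x hx
    rw [hZdef] at hx
    obtain ⟨k, _, rfl⟩ := hx
    exact he1 k
  have hZcnt : ∀ i, i < omega1 → (Z i).Countable := by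
    intro i hi
    rw [hZdef]
    exact (countable_Iio hi).image e
  have hZmem : ∀ y, y < lam → y ∈ Z (h y + 1) := by
    intro y hy
    rw [hZdef]
    exact ⟨h y, ord_lt_add_one (h y), hh2 y hy⟩
  have hZlim : ∀ i : Ordinal.{0}, Order.IsSuccLimit i → Z i = ⋃ i' ∈ Set.Iio i, Z i' := by
    intro i hi
    rw [hZdef]
    ext y
    simp only [Set.mem_image, Set.mem_Iio, Set.mem_iUnion, exists_prop]
    constructor
    · rintro ⟨k, hk, rfl⟩
      exact ⟨k + 1, add_one_lt_of_limit hi hk, k, ord_lt_add_one k, rfl⟩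
    · rintro ⟨i', hi', k, hk, rfl⟩
      exact ⟨k, hk.trans hi', rfl⟩
  -- badness witnesses
  have hAex : ∀ i : Ordinal.{0}, ∃ a : Ordinal.{0}, a < omega2 ∧
      (Z i ∈ BadSet F → ∀ ξ, a < ξ → ξ < omega2 →
        ¬(cl F (Z i ∪ {ξ}) ∩ Set.Iio omega1 ⊆ Z i)) := by
    intro i
    by_cases hB : Z i ∈ BadSet F
    · obtain ⟨a, ha1, ha2⟩ := hB.2.2
      exact ⟨a, ha1, fun _ => ha2⟩
    · exact ⟨0, omega2_pos, fun hB' => absurd hB' hB⟩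
  choose A hA1 hA2 using hAex
  -- a single bound beyond all witnesses, and the decisive ordinal ξ
  set αs : Ordinal.{0} := Ordinal.bsup.{0, 0} omega1 (fun i _ => A i) with hαsdef
  have hαs : αs < omega2 := by
    refine Ordinal.bsup_lt_ord ?_ (fun i _ => hA1 i)
    have hco : omega1.card = aleph 1 := Cardinal.card_ord (aleph 1)
    have hcof : omega2.cof = aleph 2 := isRegular_aleph_two.cof_eq
    rw [hco, hcof]
    exact aleph_lt_aleph.2 one_lt_two
  set ξ : Ordinal.{0} := αs + 1 with hξdef
  have hξ2 : ξ < omega2 := add_one_lt_of_limit isLimit_omega2 hαs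
  have hAξ : ∀ i, i < omega1 → A i < ξ :=
    fun i hi => lt_of_le_of_lt (Ordinal.le_bsup _ i hi) (ord_lt_add_one αs)
  -- the filtration of closures
  obtain ⟨W, hWdef⟩ : ∃ W : Ordinal.{0} → Set Ordinal.{0},
      W = fun i => cl F (Z i ∪ {ξ}) := ⟨_, rfl⟩
  have hWcnt : ∀ i, i < omega1 → (W i).Countable := by
    intro i hi
    rw [hWdef]
    exact cl_countable F ((hZcnt i hi).union (Set.countable_singleton ξ))
  -- trace-collapsing indices
  obtain ⟨j, hj1, hj2⟩ : ∃ j : Ordinal.{0} → Ordinal.{0}, (∀ i, j i < omega1) ∧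
      (∀ i, i < omega1 → ∀ y ∈ W i ∩ Set.Iio omega1, y ∈ Z (j i)) := by
    refine ⟨fun i => if hi : i < omega1 then
      sSup ((fun y => h y + 1) '' (W i ∩ Set.Iio omega1)) else 0, fun i => ?_, fun i hi y hy => ?_⟩
    · dsimp only
      split_ifs with hi
      · refine countable_sSup_lt_omega1 (((hWcnt i hi).mono Set.inter_subset_left).image _) ?_
        rintro o ⟨y, _, rfl⟩
        exact add_one_lt_of_limit isLimit_omega1 (hh1 y)
      · exact omega1_pos
    · have hylam : y < lam := lt_of_lt_of_le hy.2 h1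
      have hbdd : BddAbove ((fun y => h y + 1) '' (W i ∩ Set.Iio omega1)) := by
        refine ⟨omega1, ?_⟩
        rintro o ⟨y', _, rfl⟩
        exact (add_one_lt_of_limit isLimit_omega1 (hh1 y')).le
      have hle : h y + 1 ≤ (if hi : i < omega1 then
          sSup ((fun y => h y + 1) '' (W i ∩ Set.Iio omega1)) else 0) := by
        rw [dif_pos hi]
        exact le_csSup hbdd ⟨y, hy, rfl⟩
      exact hZmono hle (hZmem y hylam)
  -- the club of good indices
  obtain ⟨D, hDdef⟩ : ∃ D : Set Ordinal.{0},
      D = {i | i < omega1 ∧ Order.IsSuccLimit i ∧ ∀ i', i' < i → j i' < i} := ⟨_, rfl⟩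
  have hDlt : ∀ b ∈ D, b < omega1 := by intro b hb; rw [hDdef] at hb; exact hb.1
  have hDlim : ∀ b ∈ D, Order.IsSuccLimit b := by intro b hb; rw [hDdef] at hb; exact hb.2.1
  have hDclos : ∀ b ∈ D, ∀ i', i' < b → j i' < b := by
    intro b hb; rw [hDdef] at hb; exact hb.2.2
  -- D is unbounded below ω₁
  have hDub : ∀ a, a < omega1 → ∃ b ∈ D, a < b := by
    intro a ha
    obtain ⟨bseq, hb0, hbs⟩ : ∃ bseq : ℕ → Ordinal.{0}, bseq 0 = a + 1 ∧
        ∀ n, bseq (n + 1) = max (bseq n + 1) (sSup (j '' Set.Iio (bseq n)) + 1) :=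
      ⟨fun n => Nat.rec (a + 1) (fun _ prev => max (prev + 1) (sSup (j '' Set.Iio prev) + 1)) n,
        rfl, fun n => rfl⟩
    have hblt : ∀ n, bseq n < omega1 := by
      intro n
      induction n with
      | zero => rw [hb0]; exact add_one_lt_of_limit isLimit_omega1 ha
      | succ n ih =>
        rw [hbs]
        refine max_lt (add_one_lt_of_limit isLimit_omega1 ih) ?_
        refine add_one_lt_of_limit isLimit_omega1 ?_
        refine countable_sSup_lt_omega1 ((countable_Iio ih).image j) ?_
        rintro o ⟨i', _, rfl⟩
        exact hj1 i'
    have hbmono : ∀ n, bseq n < bseq (n + 1) := by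
      intro n
      rw [hbs]
      exact lt_of_lt_of_le (ord_lt_add_one _) (le_max_left _ _)
    have hbdd : BddAbove (Set.range bseq) := by
      refine ⟨omega1, ?_⟩
      rintro o ⟨n, rfl⟩
      exact (hblt n).le
    have hbne : (Set.range bseq).Nonempty := ⟨_, ⟨0, rfl⟩⟩
    have hblt' : sSup (Set.range bseq) < omega1 := by
      refine countable_sSup_lt_omega1 (Set.countable_range _) ?_
      rintro o ⟨n, rfl⟩
      exact hblt n
    have hmem : ∀ n, bseq n ≤ sSup (Set.range bseq) := fun n => le_csSup hbdd ⟨n, rfl⟩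
    have hbgt : ∀ x, x < sSup (Set.range bseq) → ∃ n, x < bseq n := by
      intro x hx
      obtain ⟨o, ⟨n, rfl⟩, ho⟩ := (lt_csSup_iff hbdd hbne).1 hx
      exact ⟨n, ho⟩
    refine ⟨sSup (Set.range bseq), ?_, ?_⟩
    · rw [hDdef]
      refine ⟨hblt', Ordinal.isSuccLimit_iff.2 ⟨?_, Order.isSuccPrelimit_of_succ_lt ?_⟩, ?_⟩
      · have : (0 : Ordinal) < sSup (Set.range bseq) :=
          lt_of_lt_of_le (lt_of_le_of_lt (zero_le (a := a)) (ord_lt_add_one a))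
            (hb0 ▸ hmem 0)
        exact this.ne'
      · intro x hx
        obtain ⟨n, hn⟩ := hbgt x hx
        have hx1 : Order.succ x ≤ bseq n := Order.succ_le_of_lt hn
        exact lt_of_le_of_lt hx1 (lt_of_lt_of_le (hbmono n) (hmem (n + 1)))
      · intro i' hi'
        obtain ⟨n, hn⟩ := hbgt i' hi'
        have hji : j i' ≤ sSup (j '' Set.Iio (bseq n)) := by
          refine le_csSup ⟨omega1, ?_⟩ ⟨i', hn, rfl⟩
          rintro o ⟨y', _, rfl⟩
          exact (hj1 y').le
        have hstep : j i' < bseq (n + 1) := by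
          rw [hbs]
          calc j i' < sSup (j '' Set.Iio (bseq n)) + 1 :=
                lt_of_le_of_lt hji (ord_lt_add_one _)
            _ ≤ max (bseq n + 1) (sSup (j '' Set.Iio (bseq n)) + 1) := le_max_right _ _
        exact lt_of_lt_of_le hstep (hmem (n + 1))
    · exact lt_of_lt_of_le (ord_lt_add_one a) (hb0 ▸ hmem 0)
  -- D is closed under suprema
  have hDsup : ∀ S : Set Ordinal.{0}, S ⊆ D → S.Nonempty → sSup S < omega1 → sSup S ∈ D := by
    intro S hSD hSne hSlt
    have hbdd : BddAbove S := ⟨omega1, fun x hx => (hDlt x (hSD hx)).le⟩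
    rw [hDdef]
    refine ⟨hSlt, Ordinal.isSuccLimit_iff.2 ⟨?_, Order.isSuccPrelimit_of_succ_lt ?_⟩, ?_⟩
    · obtain ⟨x, hx⟩ := hSne
      exact (lt_of_lt_of_le (hDlim x (hSD hx)).pos (le_csSup hbdd hx)).ne'
    · intro a ha
      obtain ⟨x, hx, hax⟩ := (lt_csSup_iff hbdd hSne).1 ha
      exact lt_of_lt_of_le ((hDlim x (hSD hx)).succ_lt hax) (le_csSup hbdd hx)
    · intro i' hi'
      obtain ⟨x, hx, hax⟩ := (lt_csSup_iff hbdd hSne).1 hi'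
      exact lt_of_lt_of_le (hDclos x (hSD hx) i' hax) (le_csSup hbdd hx)
  -- next element of D
  obtain ⟨P, hP⟩ : ∃ P : Ordinal.{0} → Ordinal.{0}, ∀ x, P x ∈ D ∧ h x < P x := by
    refine ⟨fun x => sInf {b | b ∈ D ∧ h x < b}, fun x => ?_⟩
    have hne' : {b | b ∈ D ∧ h x < b}.Nonempty := by
      obtain ⟨b, hb, hab⟩ := hDub (h x) (hh1 x)
      exact ⟨b, hb, hab⟩
    exact csInf_mem hne'
  have hP1 : ∀ x, P x ∈ D := fun x => (hP x).1
  have hP2 : ∀ x, h x < P x := fun x => (hP x).2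
  have hP3 : ∀ x, P x < omega1 := fun x => hDlt _ (hP1 x)
  have hPpos : ∀ x, (0 : Ordinal) < P x := fun x => (hDlim _ (hP1 x)).pos
  -- enumerations of the pieces
  have huex : ∀ x : Ordinal.{0}, ∃ g : ℕ → Ordinal.{0}, Z (P x) = Set.range g := by
    intro x
    refine (hZcnt _ (hP3 x)).exists_eq_range ?_
    rw [hZdef]
    exact ⟨e 0, 0, hPpos x, rfl⟩
  choose u hu using huex
  -- the function catching the filtration
  obtain ⟨f, hfInto, hfone, hfpair, hfnil⟩ : ∃ f : List Ordinal.{0} → Ordinal.{0},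
      IntoBelow lam f ∧ (∀ x : Ordinal.{0}, x < Ordinal.omega0 → f [x] = x + 1) ∧
      (∀ (x : Ordinal.{0}) (n : ℕ), f [x, (n : Ordinal)] = u x n) ∧ f [] = 0 := by
    refine ⟨fun s => match s with
      | [] => 0
      | [x] => if x < Ordinal.omega0 then x + 1 else 0
      | [x, y] => if hy : y < Ordinal.omega0 then
          u x (Classical.choose (Ordinal.lt_omega0.1 hy)) else 0
      | _ => 0, ?_, ?_, ?_, rfl⟩
    · rintro (_ | ⟨x, _ | ⟨y, _ | ⟨z, t⟩⟩⟩) hs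
      · exact h0lam
      · show (if x < Ordinal.omega0 then x + 1 else 0) < lam
        split_ifs with hx
        · exact lt_of_lt_of_le (lt_of_lt_of_le (add_one_lt_of_limit Ordinal.isSuccLimit_omega0 hx)
            omega0_lt_omega1.le) h1
        · exact h0lam
      · show (if hy : y < Ordinal.omega0 then
            u x (Classical.choose (Ordinal.lt_omega0.1 hy)) else 0) < lam
        split_ifs with hy
        · have hmem : u x (Classical.choose (Ordinal.lt_omega0.1 hy)) ∈ Z (P x) := by
            rw [hu x]
            exact Set.mem_range_self _
          exact hZlam _ _ hmem
        · exact h0lam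
      · exact h0lam
    · intro x hx
      show (if x < Ordinal.omega0 then x + 1 else 0) = x + 1
      rw [if_pos hx]
    · intro x n
      show (if hy : (n : Ordinal) < Ordinal.omega0 then
          u x (Classical.choose (Ordinal.lt_omega0.1 hy)) else 0) = u x n
      rw [dif_pos (Ordinal.nat_lt_omega0 n)]
      congr 1
      have hex : ∃ m : ℕ, ((n : Ordinal.{0})) = m := Ordinal.lt_omega0.1 (Ordinal.nat_lt_omega0 n)
      have hspec : ((n : Ordinal.{0})) = (Classical.choose hex : ℕ) := Classical.choose_spec hex
      exact_mod_cast hspec.symm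
  -- apply stationarity
  obtain ⟨X, hXc, hXlam, hXcl, hXB, _⟩ := hstat f hfInto
  have h0X : (0 : Ordinal) ∈ X := by
    have := hXcl [] (by simp)
    rwa [hfnil] at this
  have hnatX : ∀ n : ℕ, ((n : Ordinal)) ∈ X := by
    intro n
    induction n with
    | zero => simpa using h0X
    | succ n ih =>
      have hmem := hXcl [(n : Ordinal)] (by simpa using ih)
      rw [hfone _ (Ordinal.nat_lt_omega0 n)] at hmem
      rwa [Nat.cast_succ]
  have hZPX : ∀ x ∈ X, Z (P x) ⊆ X := by
    intro x hx z hz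
    rw [hu x] at hz
    obtain ⟨n, rfl⟩ := hz
    have hmem := hXcl [x, (n : Ordinal)] ?_
    · rwa [hfpair x n] at hmem
    · intro w hw
      rcases List.mem_cons.1 hw with rfl | hw
      · exact hx
      · rcases List.mem_cons.1 hw with rfl | hw
        · exact hnatX n
        · simp at hw
  have hXne : X.Nonempty := ⟨0, h0X⟩
  have hbddPX : BddAbove (P '' X) := by
    refine ⟨omega1, ?_⟩
    rintro o ⟨x, _, rfl⟩
    exact (hP3 x).le
  have histar1 : sSup (P '' X) < omega1 := by
    refine countable_sSup_lt_omega1 (hXc.image P) ?_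
    rintro o ⟨x, _, rfl⟩
    exact hP3 x
  have histarD : sSup (P '' X) ∈ D := by
    refine hDsup _ ?_ (hXne.image P) histar1
    rintro o ⟨x, _, rfl⟩
    exact hP1 x
  have histlim : Order.IsSuccLimit (sSup (P '' X)) := hDlim _ histarD
  -- X is caught by the filtration
  have hXeq : X = Z (sSup (P '' X)) := by
    apply Set.Subset.antisymm
    · intro x hx
      have hx1 : x ∈ Z (h x + 1) := hZmem x (hXlam x hx)
      refine hZmono ?_ hx1
      exact (add_one_le_of_lt (hP2 x)).trans (le_csSup hbddPX ⟨x, hx, rfl⟩)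
    · intro y hy
      rw [hZdef] at hy
      obtain ⟨k, hk, rfl⟩ := hy
      obtain ⟨o, ⟨x, hx, rfl⟩, hko⟩ := (lt_csSup_iff hbddPX (hXne.image P)).1 hk
      refine hZPX x hx ?_
      rw [hZdef]
      exact ⟨k, hko, rfl⟩
  -- the contradiction
  have hbad := hA2 (sSup (P '' X)) (hXeq ▸ hXB) ξ
    (hAξ _ (hDlt _ histarD)) hξ2
  apply hbad
  have hWeq : W (sSup (P '' X)) = ⋃ i' ∈ Set.Iio (sSup (P '' X)), W i' := by
    have hbase : Z (sSup (P '' X)) ∪ {ξ} =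
        ⋃ i' ∈ Set.Iio (sSup (P '' X)), (Z i' ∪ {ξ}) := by
      rw [hZlim _ histlim]
      ext y
      constructor
      · rintro (hy | hy)
        · obtain ⟨i', hi', hyi⟩ := Set.mem_iUnion₂.1 hy
          exact Set.mem_iUnion₂.2 ⟨i', hi', Or.inl hyi⟩
        · exact Set.mem_iUnion₂.2 ⟨0, histlim.pos, Or.inr hy⟩
      · intro hy
        obtain ⟨i', hi', hyi | hyi⟩ := Set.mem_iUnion₂.1 hy
        · exact Or.inl (Set.mem_iUnion₂.2 ⟨i', hi', hyi⟩)
        · exact Or.inr hyi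
    simp only [hWdef]
    rw [hbase, cl_biUnion F histlim.pos (fun i' => Z i' ∪ {ξ})
      (fun i i' hii => Set.union_subset_union (hZmono hii) (le_refl _))]
  intro y hy
  have hyW : y ∈ W (sSup (P '' X)) := by rw [hWdef]; exact hy.1
  rw [hWeq] at hyW
  obtain ⟨i', hi', hyWi'⟩ := Set.mem_iUnion₂.1 hyW
  have hi'ω : i' < omega1 := hi'.trans (hDlt _ histarD)
  have hyZ := hj2 i' hi'ω y ⟨hyWi', hy.2⟩
  exact hZmono (hDclos _ histarD i' hi').le hyZ

end WCCAux
end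


/-- `WRP(ω₂)` implies the cofinal version `WCC⁺_cof`. -/
theorem wrp_implies_wcc_plus_cof (hWRP : WRP2) :
    ∀ F : List Ordinal.{0} → Ordinal, IntoBelow omega2 F →
      ∃ G : List Ordinal.{0} → Ordinal, IntoBelow omega2 G ∧
        ∀ X : Set Ordinal.{0}, X.Countable → (∀ x ∈ X, x < omega2) → ClosedUnder G X →
          ∀ α < omega2,
            ∃ Y : Set Ordinal.{0}, Y.Countable ∧ (∀ y ∈ Y, y < omega2) ∧
              X ⊂ Y ∧
              α < sSup Y ∧
              X ∩ {o | o < omega1} = Y ∩ {o | o < omega1} ∧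
              ClosedUnder F Y := by
  intro F hF
  by_cases hstat : StationaryIn omega2 (WCCAux.BadSet F)
  · obtain ⟨lam, hl1, hl2, hstat'⟩ :=
      hWRP (WCCAux.BadSet F) (fun X hX => ⟨hX.1, hX.2.1⟩) hstat
    exact (WCCAux.not_stationary_bad hl1 hl2 hstat').elim
  · rw [StationaryIn] at hstat
    push_neg at hstat
    obtain ⟨G, hG1, hG2⟩ := hstat
    refine ⟨G, hG1, ?_⟩
    intro X hXc hXb hXcl
    exact WCCAux.good_of_not_bad hF hXc hXb (hG2 X hXc hXb hXcl)
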